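/- Let S be a doubly-symmetric 3-tensor on C^{N+1} that additionally satisfies S^{i0}_k = δ_{ik} for all i, k. Then in its diagonalization S(x) = ∑_{v ∈ V} (1/‖v‖²) ⟨v, x⟩ v ⊗ v over an orthogonal system V, the system V consists of exactly N+1 vectors, each of which has 0-th coordinate equal to 1; moreover the truncations of these vectors to coordinates 1,...,N form an obtuse system of C^N. -/

import Mathlib

open scoped BigOperators InnerProductSpace ComplexConjugate

/-- **Diagonalization of the 3-tensor of an obtuse random variable.**
Let `S` be a (doubly-symmetric) 3-tensor on `ℂ^{N+1}` with `S^{i0}_k = δ_{ik}`, and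
suppose `S` is diagonalized over an orthogonal family `v 1, …, v K` of nonzero
vectors.  Then `K = N + 1`, every `v m` has 0-th coordinate `1`, and the truncations
of the `v m` to coordinates `1, …, N` form an obtuse system of `ℂ^N`. -/
theorem tensor_with_delta_condition_gives_obtuse_system (N K : ℕ)
    (S : Fin (N + 1) → Fin (N + 1) → Fin (N + 1) → ℂ)
    (hdelta : ∀ i k, S i 0 k = if i = k then 1 else 0)
    (v : Fin K → EuclideanSpace ℂ (Fin (N + 1)))
    (horth : ∀ m n, m ≠ n → ⟪v m, v n⟫_ℂ = 0)
    (hne : ∀ m, v m ≠ 0)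
    (hrep : ∀ i j k, S i j k
      = ∑ m, (1 / (‖v m‖ ^ 2 : ℂ)) * (v m i * v m j * (starRingEnd ℂ) (v m k))) :
    K = N + 1 ∧ (∀ m, v m 0 = 1) ∧
      ∀ m n, m ≠ n → ∑ k : Fin N, (starRingEnd ℂ) (v m k.succ) * v n k.succ = -1 := by
  classical
  set c : Fin K → ℂ := fun m => 1 / (‖v m‖ ^ 2 : ℂ) with hc
  have hnorm : ∀ m, (‖v m‖ ^ 2 : ℂ) ≠ 0 := fun m =>
    pow_ne_zero 2 (Complex.ofReal_ne_zero.2 (norm_ne_zero_iff.2 (hne m)))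
  have hinner : ∀ m n, ⟪v m, v n⟫_ℂ = ∑ k, (starRingEnd ℂ) (v m k) * v n k := fun m n => by
    simp [PiLp.inner_apply]
    exact Finset.sum_congr rfl fun _ _ => mul_comm _ _
  have hself : ∀ m, (∑ k, (starRingEnd ℂ) (v m k) * v m k) = (‖v m‖ ^ 2 : ℂ) := fun m => by
    rw [← hinner]; exact inner_self_eq_norm_sq_to_K (v m)
  have hS : ∀ i k, ∑ m, c m * (v m i * v m 0 * (starRingEnd ℂ) (v m k))
      = if i = k then 1 else 0 := fun i k => (hrep i 0 k).symm.trans (hdelta i k)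
  -- key: v n 0 * v n i = v n i
  have hkey : ∀ n i, v n 0 * v n i = v n i := by
    intro n i
    have h1 : ∑ k, (∑ m, c m * (v m i * v m 0 * (starRingEnd ℂ) (v m k))) * v n k
        = ∑ k, (if i = k then 1 else 0) * v n k := by
      simp_rw [hS]
    have hrhs : ∑ k, (if i = k then (1:ℂ) else 0) * v n k = v n i := by
      simp
    have hlhs : ∑ k, (∑ m, c m * (v m i * v m 0 * (starRingEnd ℂ) (v m k))) * v n k
        = v n 0 * v n i := by
      simp_rw [Finset.sum_mul]
      rw [Finset.sum_comm]
      rw [Finset.sum_eq_single n]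
      · have : ∑ k, c n * (v n i * v n 0 * (starRingEnd ℂ) (v n k)) * v n k
            = c n * (v n i * v n 0) * ∑ k, (starRingEnd ℂ) (v n k) * v n k := by
          rw [Finset.mul_sum]; apply Finset.sum_congr rfl; intro k _; ring
        have hcn : c n * (‖v n‖ ^ 2 : ℂ) = 1 := by
          rw [hc]; exact one_div_mul_cancel (hnorm n)
        rw [this, hself]
        linear_combination v n i * v n 0 * hcn
      · intro m _ hm
        have h0 : ∑ k, (starRingEnd ℂ) (v m k) * v n k = 0 := by
          rw [← hinner]; exact horth m n hm
        calc ∑ k, c m * (v m i * v m 0 * (starRingEnd ℂ) (v m k)) * v n k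
            = c m * (v m i * v m 0) * ∑ k, (starRingEnd ℂ) (v m k) * v n k := by
              rw [Finset.mul_sum]; apply Finset.sum_congr rfl; intro k _; ring
          _ = 0 := by rw [h0, mul_zero]
      · simp
    rw [hlhs, hrhs] at h1
    exact h1
  have hv0 : ∀ m, v m 0 = 1 := by
    intro n
    obtain ⟨i, hi⟩ : ∃ i, v n i ≠ 0 := by
      by_contra h
      push_neg at h
      exact hne n (PiLp.ext fun i => by simp [h i])
    have h := hkey n i
    have h1 : v n 0 * v n i = 1 * v n i := by rw [h, one_mul]
    exact mul_right_cancel₀ hi h1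
  refine ⟨?_, hv0, ?_⟩
  · -- K = N + 1
    have hle : K ≤ N + 1 := by
      have li := linearIndependent_of_ne_zero_of_inner_eq_zero hne horth
      have := li.fintype_card_le_finrank
      simpa [finrank_euclideanSpace_fin] using this
    have hS' : ∀ i k, ∑ m, (c m * (starRingEnd ℂ) (v m k)) * v m i
        = if i = k then 1 else 0 := by
      intro i k
      rw [← hS i k]
      apply Finset.sum_congr rfl
      intro m _
      rw [hv0 m]
      ring
    have hspan : Submodule.span ℂ (Set.range v) = ⊤ := by
      rw [eq_top_iff]
      rintro x -
      have hx : x = ∑ m, (c m * ⟪v m, x⟫_ℂ) • v m := by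
        ext i
        have h2 : (∑ m, (c m * ⟪v m, x⟫_ℂ) • v m) i
            = ∑ m, (c m * ⟪v m, x⟫_ℂ) * v m i := by
          rw [show (∑ m, (c m * ⟪v m, x⟫_ℂ) • v m) i
              = ∑ m, ((c m * ⟪v m, x⟫_ℂ) • v m) i from
            (congrFun (WithLp.ofLp_sum (s := Finset.univ) (f := fun m => (c m * ⟪v m, x⟫_ℂ) • v m)) i).trans (Finset.sum_apply i Finset.univ _)]
          simp [PiLp.smul_apply, smul_eq_mul]
        rw [h2]
        simp_rw [PiLp.inner_apply, RCLike.inner_apply', Finset.mul_sum, Finset.sum_mul]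
        rw [Finset.sum_comm]
        have : ∀ k, ∑ m, c m * ((starRingEnd ℂ) (v m k) * x k) * v m i
            = (if i = k then 1 else 0) * x k := by
          intro k
          rw [← hS' i k, Finset.sum_mul]
          apply Finset.sum_congr rfl
          intro m _; ring
        simp_rw [this]
        simp
      rw [hx]
      exact Submodule.sum_mem _ fun m _ =>
        Submodule.smul_mem _ _ (Submodule.subset_span ⟨m, rfl⟩)
    have hge : N + 1 ≤ K := by
      have := finrank_le_of_span_eq_top hspan
      simpa [finrank_euclideanSpace_fin] using this
    omega
  · -- obtuse
    intro m n hmn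
    have h0 : ∑ k, (starRingEnd ℂ) (v m k) * v n k = 0 := by
      rw [← hinner]; exact horth m n hmn
    rw [Fin.sum_univ_succ] at h0
    rw [hv0 m, hv0 n] at h0
    simp at h0
    linear_combination h0
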